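/- Let R be a Jacobi-Tsankov algebraic curvature tensor on V with dim V ≥ 3, and suppose that for some orthonormal basis {e_i}, R(e_i, e_j, e_j, e_k) = 0 for all distinct triples of indices i, j, k, and (if dim V ≥ 4) R(e_i, e_j, e_k, e_ℓ) = 0 for distinct i,j,k,ℓ. If additionally R(e_i(θ), e_k, e_k, e_j(θ)) = 0 for all rotated bases e_i(θ) = cos θ e_i + sin θ e_j, e_j(θ) = -sin θ e_i + cos θ e_j, then all sectional curvatures c_{ij} = R(e_i,e_j,e_j,e_i) are equal, i.e., R has constant sectional curvature. -/
import Mathlib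


open scoped InnerProductSpace
noncomputable section

variable {V : Type*} [NormedAddCommGroup V] [InnerProductSpace ℝ V]

/-- `R` satisfies the symmetries of an algebraic curvature tensor. -/
def IsCurvatureOperator (R : V →ₗ[ℝ] V →ₗ[ℝ] V →ₗ[ℝ] V) : Prop :=
  (∀ x y z w : V, ⟪R x y z, w⟫_ℝ = ⟪R z w x, y⟫_ℝ) ∧
  (∀ x y z w : V, ⟪R x y z, w⟫_ℝ = - ⟪R y x z, w⟫_ℝ) ∧
  (∀ x y z w : V, ⟪R x y z, w⟫_ℝ + ⟪R y z x, w⟫_ℝ + ⟪R z x y, w⟫_ℝ = 0)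

/-- The Jacobi operator `J(x) : y ↦ R(y,x)x`. -/
def Jacobi (R : V →ₗ[ℝ] V →ₗ[ℝ] V →ₗ[ℝ] V) (x : V) : V →ₗ[ℝ] V where
  toFun y := R y x x
  map_add' a b := by simp
  map_smul' c a := by simp

/-- The polarized Jacobi operator `J(x,y) : z ↦ ½R(z,x)y + ½R(z,y)x`. -/
def JacobiP (R : V →ₗ[ℝ] V →ₗ[ℝ] V →ₗ[ℝ] V) (x y : V) : V →ₗ[ℝ] V where
  toFun z := (1/2 : ℝ) • R z x y + (1/2 : ℝ) • R z y x
  map_add' a b := by simp; module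
  map_smul' c a := by simp; module

/-- `R` is Jacobi-Tsankov: Jacobi operators of orthogonal vectors commute. -/
def JacobiTsankov (R : V →ₗ[ℝ] V →ₗ[ℝ] V →ₗ[ℝ] V) : Prop :=
  ∀ x y : V, ⟪x, y⟫_ℝ = 0 → Jacobi R x ∘ₗ Jacobi R y = Jacobi R y ∘ₗ Jacobi R x

theorem stmt8 [FiniteDimensional ℝ V] (hm : 3 ≤ Module.finrank ℝ V)
    (R : V →ₗ[ℝ] V →ₗ[ℝ] V →ₗ[ℝ] V) (hR : IsCurvatureOperator R)
    (hT : JacobiTsankov R)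
    (b : OrthonormalBasis (Fin (Module.finrank ℝ V)) ℝ V)
    (h1 : ∀ i j k, i ≠ j → j ≠ k → i ≠ k → ⟪R (b i) (b j) (b j), b k⟫_ℝ = 0)
    (h2 : 4 ≤ Module.finrank ℝ V → ∀ i j k l, i ≠ j → i ≠ k → i ≠ l → j ≠ k → j ≠ l →
      k ≠ l → ⟪R (b i) (b j) (b k), b l⟫_ℝ = 0)
    (h3 : ∀ (θ : ℝ) i j k, i ≠ j → j ≠ k → i ≠ k →
      ⟪R (Real.cos θ • b i + Real.sin θ • b j) (b k) (b k),
        -Real.sin θ • b i + Real.cos θ • b j⟫_ℝ = 0) :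
    ∃ c : ℝ, (∀ i j, i ≠ j → ⟪R (b i) (b j) (b j), b i⟫_ℝ = c) ∧
      ∀ x y z w : V, ⟪R x y z, w⟫_ℝ =
        c * (⟪y, z⟫_ℝ * ⟪x, w⟫_ℝ - ⟪x, z⟫_ℝ * ⟪y, w⟫_ℝ) := by
  obtain ⟨hsym, hanti, -⟩ := hR
  -- antisymmetry in the last pair
  have hanti2 : ∀ x y z w : V, ⟪R x y z, w⟫_ℝ = - ⟪R x y w, z⟫_ℝ := by
    intro x y z w
    rw [hsym x y z w, hanti z w x y, hsym w z x y]
  -- abbreviation for sectional curvatures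
  set S : Fin (Module.finrank ℝ V) → Fin (Module.finrank ℝ V) → ℝ := fun i j => ⟪R (b i) (b j) (b j), b i⟫_ℝ with hS
  have hs : ∀ i j, S i j = S j i := fun i j => hsym (b i) (b j) (b j) (b i)
  -- step B : equality of sectional curvatures with a common index
  have hB : ∀ i j k, i ≠ j → j ≠ k → i ≠ k → S i k = S j k := by
    intro i j k hij hjk hik
    have h := h3 (Real.pi/4) i j k hij hjk hik
    have e1 := h1 i k j hik (Ne.symm hjk) hij
    have e2 := h1 j k i hjk (Ne.symm hik) (Ne.symm hij)
    simp only [map_add, map_smul, LinearMap.add_apply, LinearMap.smul_apply, inner_add_left,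
      inner_add_right, real_inner_smul_left, real_inner_smul_right, e1, e2, mul_zero, add_zero,
      zero_add] at h
    rw [Real.cos_pi_div_four, Real.sin_pi_div_four] at h
    have h2' : Real.sqrt 2 ^ 2 = 2 := Real.sq_sqrt (by norm_num)
    simp only [hS]
    nlinarith [h, h2']
  -- step C : all sectional curvatures agree
  have hEq : ∀ p q r s, p ≠ q → r ≠ s → S p q = S r s := by
    intro p q r s hpq hrs
    by_cases h1' : p = r
    · subst h1'
      by_cases h2' : q = s
      · subst h2'; rfl
      · calc S p q = S q p := hs p q
          _ = S s p := hB q s p h2' (Ne.symm hrs) (Ne.symm hpq)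
          _ = S p s := hs s p
    · by_cases h2' : p = s
      · subst h2'
        by_cases h3' : q = r
        · subst h3'; exact hs p q
        · calc S p q = S q p := hs p q
            _ = S r p := hB q r p h3' hrs (Ne.symm hpq)
      · have step1 : S p q = S p s := by
          by_cases h3' : q = s
          · rw [h3']
          · calc S p q = S q p := hs p q
              _ = S s p := hB q s p h3' (Ne.symm h2') (Ne.symm hpq)
              _ = S p s := hs s p
        calc S p q = S p s := step1
          _ = S r s := hB p r s h1' hrs h2'
  -- the constant
  have h0 : (0 : ℕ) < Module.finrank ℝ V := by omega
  have h1' : (1 : ℕ) < Module.finrank ℝ V := by omega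
  set i0 : Fin (Module.finrank ℝ V) := ⟨0, h0⟩
  set i1 : Fin (Module.finrank ℝ V) := ⟨1, h1'⟩
  have hi01 : i0 ≠ i1 := by simp [i0, i1, Fin.ext_iff]
  refine ⟨S i0 i1, fun i j hij => hEq i j i0 i1 hij hi01, ?_⟩
  set c : ℝ := S i0 i1 with hc
  -- orthonormality
  have hbo : ∀ i j : Fin (Module.finrank ℝ V), ⟪b i, b j⟫_ℝ = if i = j then 1 else 0 :=
    fun i j => orthonormal_iff_ite.mp b.orthonormal i j
  -- components on the basis
  have hcomp : ∀ i j k l, ⟪R (b i) (b j) (b k), b l⟫_ℝ =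
      c * (⟪b j, b k⟫_ℝ * ⟪b i, b l⟫_ℝ - ⟪b i, b k⟫_ℝ * ⟪b j, b l⟫_ℝ) := by
    intro i j k l
    by_cases hij : i = j
    · subst hij
      have hz : ⟪R (b i) (b i) (b k), b l⟫_ℝ = 0 := by
        have := hanti (b i) (b i) (b k) (b l); linarith
      rw [hz]; simp only [hbo]; ring
    by_cases hkl : k = l
    · subst hkl
      have hz : ⟪R (b i) (b j) (b k), b k⟫_ℝ = 0 := by
        have := hanti2 (b i) (b j) (b k) (b k); linarith
      rw [hz]; simp only [hbo]; ring
    by_cases hjk : j = k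
    · subst hjk
      by_cases hil : i = l
      · subst hil
        rw [show ⟪R (b i) (b j) (b j), b i⟫_ℝ = c from hEq i j i0 i1 hij hi01]
        simp only [hbo]
        simp [hij, Ne.symm hij]
      · rw [h1 i j l hij (show j ≠ l from hkl) hil]
        simp only [hbo]
        simp [hij, hil, show ¬ j = l from hkl]
    by_cases hik : i = k
    · subst hik
      by_cases hjl : j = l
      · subst hjl
        have hz : ⟪R (b i) (b j) (b i), b j⟫_ℝ = -c := by
          rw [hanti (b i) (b j) (b i) (b j),
            show ⟪R (b j) (b i) (b i), b j⟫_ℝ = c from hEq j i i0 i1 (Ne.symm hij) hi01]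
        rw [hz]; simp only [hbo]
        simp [hij, Ne.symm hij]
      · have hz : ⟪R (b i) (b j) (b i), b l⟫_ℝ = 0 := by
          rw [hanti (b i) (b j) (b i) (b l),
            h1 j i l (Ne.symm hij) (show i ≠ l from hkl) hjl, neg_zero]
        rw [hz]; simp only [hbo]
        simp [Ne.symm hij, hjl, show ¬ i = l from hkl]
    by_cases hil : i = l
    · subst hil
      have hz : ⟪R (b i) (b j) (b k), b i⟫_ℝ = 0 := by
        rw [hsym (b i) (b j) (b k) (b i)]
        exact h1 k i j (Ne.symm hik) hij (Ne.symm hjk)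
      rw [hz]; simp only [hbo]
      simp [hjk, hik, show ¬ k = i from Ne.symm hik, show ¬ j = i from Ne.symm hij]
    by_cases hjl : j = l
    · subst hjl
      have hz : ⟪R (b i) (b j) (b k), b j⟫_ℝ = 0 := by
        rw [hanti2 (b i) (b j) (b k) (b j), h1 i j k hij hjk hik, neg_zero]
      rw [hz]; simp only [hbo]
      simp [hjk, hil, hik]
    · -- all four distinct
      have hcard : (4 : ℕ) ≤ Module.finrank ℝ V := by
        have hc4 : ({i, j, k, l} : Finset (Fin (Module.finrank ℝ V))).card = 4 := by
          rw [Finset.card_insert_of_notMem (by simp [hij, hik, hil]),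
            Finset.card_insert_of_notMem (by simp [hjk, hjl]),
            Finset.card_insert_of_notMem (by simp [hkl]), Finset.card_singleton]
        calc (4:ℕ) = ({i, j, k, l} : Finset (Fin (Module.finrank ℝ V))).card := hc4.symm
          _ ≤ Finset.univ.card := Finset.card_le_univ _
          _ = Module.finrank ℝ V := by simp
      rw [h2 hcard i j k l hij hik hil hjk hjl hkl]
      simp only [hbo]
      simp [hjk, hil, hik, hjl]
  -- extension by multilinearity
  have L4 : ∀ i j k (w : V), ⟪R (b i) (b j) (b k), w⟫_ℝ =
      c * (⟪b j, b k⟫_ℝ * ⟪b i, w⟫_ℝ - ⟪b i, b k⟫_ℝ * ⟪b j, w⟫_ℝ) := by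
    intro i j k w
    conv_lhs => rw [← b.sum_repr w]
    conv_rhs => rw [← b.sum_repr w]
    simp only [inner_sum, real_inner_smul_right, Finset.mul_sum, ← Finset.sum_sub_distrib]
    refine Finset.sum_congr rfl fun l _ => ?_
    rw [hcomp i j k l]; ring
  have L3 : ∀ i j (z w : V), ⟪R (b i) (b j) z, w⟫_ℝ =
      c * (⟪b j, z⟫_ℝ * ⟪b i, w⟫_ℝ - ⟪b i, z⟫_ℝ * ⟪b j, w⟫_ℝ) := by
    intro i j z w
    conv_lhs => rw [← b.sum_repr z]
    conv_rhs => rw [← b.sum_repr z]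
    simp only [map_sum, map_smul, LinearMap.smul_apply, sum_inner, real_inner_smul_left,
      inner_sum, real_inner_smul_right, Finset.sum_mul, Finset.mul_sum, mul_sub, sub_mul,
      ← Finset.sum_sub_distrib]
    refine Finset.sum_congr rfl fun k _ => ?_
    rw [L4 i j k w]; ring
  have L2 : ∀ i (y z w : V), ⟪R (b i) y z, w⟫_ℝ =
      c * (⟪y, z⟫_ℝ * ⟪b i, w⟫_ℝ - ⟪b i, z⟫_ℝ * ⟪y, w⟫_ℝ) := by
    intro i y z w
    conv_lhs => rw [← b.sum_repr y]
    conv_rhs => rw [← b.sum_repr y]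
    simp only [map_sum, map_smul, LinearMap.sum_apply, LinearMap.smul_apply, sum_inner,
      real_inner_smul_left, Finset.sum_mul, Finset.mul_sum, mul_sub, sub_mul,
      ← Finset.sum_sub_distrib]
    refine Finset.sum_congr rfl fun j _ => ?_
    rw [L3 i j z w]; ring
  intro x y z w
  conv_lhs => rw [← b.sum_repr x]
  conv_rhs => rw [← b.sum_repr x]
  simp only [map_sum, map_smul, LinearMap.sum_apply, LinearMap.smul_apply, sum_inner,
    real_inner_smul_left, Finset.sum_mul, Finset.mul_sum, mul_sub, sub_mul,
    ← Finset.sum_sub_distrib]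
  refine Finset.sum_congr rfl fun i _ => ?_
  rw [L2 i y z w]; ring
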